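/- Let G be the clique star 𝕂_{u,n_2,...,n_{k+1}}, obtained from the star K_{1,k} by replacing each edge with a clique K_{n_i} (i = 2,...,k+1, each n_i ≥ 2), all cliques sharing only the center vertex u; set n = 1 + ∑_{i=2}^{k+1}(n_i − 1). Then the Laplacian spectrum of G is {0, n, 1 with multiplicity k−1, and n_i with multiplicity n_i−2 for each i = 2,...,k+1}. -/

import Mathlib

open Matrix BigOperators Polynomial
open scoped Classical

set_option linter.unusedSectionVars false
set_option maxHeartbeats 1600000

/-- The clique star `𝕂_{u,n_2,…,n_{k+1}}`: `k` cliques of sizes `c i` all sharing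
exactly one common (center) vertex.  The vertices are the center `none` together with
the `c i - 1` non-center vertices `some ⟨i, a⟩` of the `i`-th clique. -/
def cliqueStar {k : ℕ} (c : Fin k → ℕ) :
    SimpleGraph (Option (Σ i : Fin k, Fin (c i - 1))) where
  Adj x y := x ≠ y ∧ ∀ a b, x = some a → y = some b → a.1 = b.1
  symm := by
    constructor
    rintro x y ⟨hxy, h⟩
    exact ⟨hxy.symm, fun a b ha hb => (h b a hb ha).symm⟩
  loopless := by constructor; rintro x ⟨hxx, -⟩; exact hxx rfl

noncomputable section CliqueStarAux

variable {ι : Type*} [Fintype ι] [DecidableEq ι]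

/-- all-ones matrix -/
def Jmat (ι : Type*) : Matrix ι ι ℝ := Matrix.of fun _ _ => (1:ℝ)

lemma Jmat_apply (i j : ι) : Jmat ι i j = 1 := rfl

lemma J_mul_J : Jmat ι * Jmat ι = (Fintype.card ι : ℝ) • Jmat ι := by
  ext i j
  simp [Jmat, Matrix.mul_apply, Finset.card_univ]

lemma det_aJ (a : ℝ) (ha : a ≠ 0) (h1 : 1 ≤ Fintype.card ι) :
    (a • (1 : Matrix ι ι ℝ) + Jmat ι).det
      = a ^ (Fintype.card ι - 1) * (a + Fintype.card ι) := by
  have key : a • (1 : Matrix ι ι ℝ) + Jmat ι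
      = a • ((1 : Matrix ι ι ℝ) + Matrix.replicateCol Unit (fun _ => a⁻¹) * Matrix.replicateRow Unit (fun _ => (1:ℝ))) := by
    ext i j
    by_cases h : i = j <;>
      simp [h, Jmat, Matrix.mul_apply, Matrix.one_apply, mul_add, mul_inv_cancel₀ ha]
  rw [key, Matrix.det_smul, Matrix.det_one_add_replicateCol_mul_replicateRow]
  have hdot : (fun _ : ι => (1:ℝ)) ⬝ᵥ (fun _ => a⁻¹) = (Fintype.card ι : ℝ) * a⁻¹ := by
    simp [dotProduct, Finset.card_univ]
  rw [hdot]
  obtain ⟨m, hm⟩ : ∃ m, Fintype.card ι = m + 1 := ⟨Fintype.card ι - 1, by omega⟩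
  rw [hm]
  simp only [Nat.add_sub_cancel]
  rw [pow_succ]
  field_simp

lemma mul_inv_aJ (a : ℝ) (ha : a ≠ 0) (hb : a + Fintype.card ι ≠ 0) :
    (a • (1 : Matrix ι ι ℝ) + Jmat ι)
      * (a⁻¹ • (1 : Matrix ι ι ℝ) + (-(a * (a + Fintype.card ι))⁻¹) • Jmat ι) = 1 := by
  set m : ℝ := (Fintype.card ι : ℝ) with hm
  set β : ℝ := -(a * (a + m))⁻¹ with hβ
  have expand : (a • (1 : Matrix ι ι ℝ) + Jmat ι) * (a⁻¹ • (1 : Matrix ι ι ℝ) + β • Jmat ι)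
      = (a * a⁻¹) • (1 : Matrix ι ι ℝ) + (a * β + a⁻¹ + m * β) • Jmat ι := by
    simp only [Matrix.add_mul, Matrix.mul_add, Matrix.smul_mul, Matrix.mul_smul,
      Matrix.one_mul, Matrix.mul_one, J_mul_J, smul_smul, ← hm]
    module
  rw [expand, mul_inv_cancel₀ ha]
  have : a * β + a⁻¹ + m * β = 0 := by
    rw [hβ]
    field_simp
    ring
  rw [this, zero_smul, add_zero, one_smul]


/-- fiber equiv for sigma types -/
def fiberEquiv {k : ℕ} (m : Fin k → ℕ) (i : Fin k) :
    Fin (m i) ≃ {p : Σ j : Fin k, Fin (m j) // p.1 = i} where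
  toFun a := ⟨⟨i, a⟩, rfl⟩
  invFun p := Fin.cast (congrArg m p.2) p.1.2
  left_inv a := rfl
  right_inv := by rintro ⟨⟨j, b⟩, rfl⟩; rfl

lemma det_blockDiagonal'' {k : ℕ} (m : Fin k → ℕ)
    (M : ∀ i, Matrix (Fin (m i)) (Fin (m i)) ℝ) :
    (Matrix.blockDiagonal' M).det = ∏ i, (M i).det := by
  rw [(Matrix.blockTriangular_blockDiagonal' M).det_fintype]
  refine Finset.prod_congr rfl fun i _ => ?_
  rw [← Matrix.det_submatrix_equiv_self (fiberEquiv m i)]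
  congr 1
  ext a b
  simp [fiberEquiv, Matrix.toSquareBlock_def, Matrix.blockDiagonal'_apply_eq]


variable {k : ℕ} {c : Fin k → ℕ}

lemma adj_none_some (p : Σ i : Fin k, Fin (c i - 1)) :
    (cliqueStar c).Adj none (some p) := by
  refine ⟨by simp, ?_⟩
  rintro a b h1 h2
  exact absurd h1 (by simp)

lemma adj_some_some (p q : Σ i : Fin k, Fin (c i - 1)) :
    (cliqueStar c).Adj (some p) (some q) ↔ p ≠ q ∧ p.1 = q.1 := by
  constructor
  · rintro ⟨h1, h2⟩
    exact ⟨fun h => h1 (by rw [h]), h2 p q rfl rfl⟩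
  · rintro ⟨h1, h2⟩
    refine ⟨by simpa using h1, ?_⟩
    rintro a b ha hb
    obtain rfl : a = p := by simpa using ha.symm
    obtain rfl : b = q := by simpa using hb.symm
    exact h2

lemma deg_none : (cliqueStar c).degree none = ∑ i, (c i - 1) := by
  have h1 : (cliqueStar c).neighborFinset none = Finset.univ.erase none := by
    ext v
    cases v with
    | none => simp [SimpleGraph.mem_neighborFinset]
    | some p => simp [SimpleGraph.mem_neighborFinset, adj_none_some p]
  rw [SimpleGraph.degree, h1, Finset.card_erase_of_mem (Finset.mem_univ _),
    Finset.card_univ, Fintype.card_option, Fintype.card_sigma]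
  simp

lemma deg_some (hc : ∀ i, 2 ≤ c i) (p : Σ i : Fin k, Fin (c i - 1)) :
    (cliqueStar c).degree (some p) = c p.1 - 1 := by
  classical
  have h1 : (cliqueStar c).neighborFinset (some p)
      = insert none ((Finset.univ.image fun b : Fin (c p.1 - 1) =>
          (some ⟨p.1, b⟩ : Option (Σ i : Fin k, Fin (c i - 1)))).erase (some p)) := by
    ext v
    cases v with
    | none =>
      simp [SimpleGraph.mem_neighborFinset, ((cliqueStar c).adj_comm _ _).mp (adj_none_some p)]
    | some q =>
      simp only [SimpleGraph.mem_neighborFinset, adj_some_some, Finset.mem_insert,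
        Finset.mem_erase, Finset.mem_image, Finset.mem_univ, true_and]
      constructor
      · rintro ⟨hne, hfst⟩
        refine Or.inr ⟨by simpa [eq_comm] using hne, ?_⟩
        obtain ⟨i, a⟩ := p
        obtain ⟨j, b⟩ := q
        cases hfst
        exact ⟨b, rfl⟩
      · rintro (h | ⟨hne, b, hb⟩)
        · exact absurd h (by simp)
        · obtain rfl : (⟨p.1, b⟩ : Σ i : Fin k, Fin (c i - 1)) = q := by simpa using hb
          exact ⟨by simpa [eq_comm] using hne, rfl⟩
  have h2 : (some p : Option (Σ i : Fin k, Fin (c i - 1)))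
      ∈ Finset.univ.image fun b : Fin (c p.1 - 1) =>
          (some ⟨p.1, b⟩ : Option (Σ i : Fin k, Fin (c i - 1))) := by
    refine Finset.mem_image.2 ⟨p.2, Finset.mem_univ _, ?_⟩
    congr
  have h3 : (Finset.univ.image fun b : Fin (c p.1 - 1) =>
      (some ⟨p.1, b⟩ : Option (Σ i : Fin k, Fin (c i - 1)))).card = c p.1 - 1 := by
    rw [Finset.card_image_of_injective _ (fun a b hab => by simpa using hab),
      Finset.card_univ, Fintype.card_fin]
  rw [SimpleGraph.degree, h1, Finset.card_insert_of_notMem (by simp),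
    Finset.card_erase_of_mem h2, h3]
  have := hc p.1
  omega


def toSum (σ : Type*) : Option σ ≃ Unit ⊕ σ where
  toFun v := v.elim (Sum.inl ()) Sum.inr
  invFun := Sum.elim (fun _ => none) some
  left_inv := by rintro (_|p) <;> rfl
  right_inv := by rintro (⟨⟩|p) <;> rfl

@[simp] lemma toSum_none {σ : Type*} : toSum σ none = Sum.inl () := rfl
@[simp] lemma toSum_some {σ : Type*} (p : σ) : toSum σ (some p) = Sum.inr p := rfl

/-- the D block -/
def Dblk (c : Fin k → ℕ) (x : ℝ) :
    Matrix (Σ i : Fin k, Fin (c i - 1)) (Σ i : Fin k, Fin (c i - 1)) ℝ :=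
  Matrix.blockDiagonal' fun i => (x - c i) • (1 : Matrix (Fin (c i - 1)) (Fin (c i - 1)) ℝ) + Jmat _

lemma key_matrix (hc : ∀ i, 2 ≤ c i) (x : ℝ) :
    x • (1 : Matrix (Option (Σ i : Fin k, Fin (c i - 1))) _ ℝ)
        - (cliqueStar c).lapMatrix ℝ
      = (Matrix.fromBlocks
          (Matrix.of fun _ _ => x - (∑ i, (c i - 1) : ℕ))
          (Matrix.of fun _ _ => (1:ℝ))
          (Matrix.of fun _ _ => (1:ℝ))
          (Dblk c x)).submatrix (toSum _) (toSum _) := by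
  ext v w
  rcases v with _ | p <;> rcases w with _ | q
  · simp [SimpleGraph.lapMatrix, SimpleGraph.degMatrix, deg_none,
      Matrix.one_apply, (cliqueStar c).irrefl]
  · have hadj := adj_none_some q
    simp [SimpleGraph.lapMatrix, SimpleGraph.degMatrix, hadj, Matrix.one_apply]
  · have hadj := ((cliqueStar c).adj_comm _ _).mp (adj_none_some p)
    simp [SimpleGraph.lapMatrix, SimpleGraph.degMatrix, hadj, Matrix.one_apply]
  · obtain ⟨i, a⟩ := p
    obtain ⟨j, b⟩ := q
    by_cases hij : i = j
    · subst hij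
      by_cases hab : a = b
      · subst hab
        have h1 : ¬ (cliqueStar c).Adj (some ⟨i, a⟩) (some ⟨i, a⟩) := (cliqueStar c).irrefl
        simp only [Matrix.submatrix_apply, toSum_some, Matrix.fromBlocks_apply₂₂,
          Dblk, Matrix.blockDiagonal'_apply_eq]
        simp [SimpleGraph.lapMatrix, SimpleGraph.degMatrix, deg_some hc,
          Matrix.one_apply, h1, Jmat]
        rw [Nat.cast_sub (by have := hc i; omega)]
        push_cast
        ring
      · have hne : (⟨i, a⟩ : Σ i : Fin k, Fin (c i - 1)) ≠ ⟨i, b⟩ := by simp [hab]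
        have hadj : (cliqueStar c).Adj (some ⟨i, a⟩) (some ⟨i, b⟩) :=
          (adj_some_some _ _).mpr ⟨hne, rfl⟩
        simp only [Matrix.submatrix_apply, toSum_some, Matrix.fromBlocks_apply₂₂,
          Dblk, Matrix.blockDiagonal'_apply_eq]
        simp [SimpleGraph.lapMatrix, SimpleGraph.degMatrix, hadj, Matrix.one_apply, hab, hne,
          Jmat]
    · have hne : (⟨i, a⟩ : Σ i : Fin k, Fin (c i - 1)) ≠ ⟨j, b⟩ := by
        intro h; exact hij (congrArg Sigma.fst h)
      have hadj : ¬ (cliqueStar c).Adj (some ⟨i, a⟩) (some ⟨j, b⟩) := by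
        rw [adj_some_some]; rintro ⟨-, h⟩; exact hij h
      simp only [Matrix.submatrix_apply, toSum_some, Matrix.fromBlocks_apply₂₂, Dblk]
      rw [Matrix.blockDiagonal'_apply_ne _ _ _ hij]
      simp [SimpleGraph.lapMatrix, SimpleGraph.degMatrix, hadj, Matrix.one_apply, hne]

def Ninv (c : Fin k → ℕ) (x : ℝ) (i : Fin k) :
    Matrix (Fin (c i - 1)) (Fin (c i - 1)) ℝ :=
  (x - c i)⁻¹ • 1 + (-((x - c i) * (x - 1))⁻¹) • Jmat _

lemma main_det (hk : 1 ≤ k) (hc : ∀ i, 2 ≤ c i) (x : ℝ)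
    (hx1 : x - 1 ≠ 0) (hxc : ∀ i, x - c i ≠ 0) :
    (x • (1 : Matrix (Option (Σ i : Fin k, Fin (c i - 1))) _ ℝ)
        - (cliqueStar c).lapMatrix ℝ).det
      = x * (x - (1 + (∑ i, (c i - 1) : ℕ))) * (x - 1) ^ (k - 1)
          * ∏ i, (x - (c i : ℝ)) ^ (c i - 2) := by
  have hm1 : ∀ i, 1 ≤ c i - 1 := fun i => by have := hc i; omega
  have hcard : ∀ i : Fin k, ((Fintype.card (Fin (c i - 1)) : ℕ) : ℝ) = (c i : ℝ) - 1 := by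
    intro i
    rw [Fintype.card_fin, Nat.cast_sub (by have := hc i; omega)]
    simp
  have hsum : ∀ i : Fin k,
      (x - c i) + ((Fintype.card (Fin (c i - 1)) : ℕ) : ℝ) = x - 1 := by
    intro i; rw [hcard]; ring
  have hblock : ∀ i, ((x - (c i : ℝ)) • 1 + Jmat (Fin (c i - 1))) * Ninv c x i = 1 := by
    intro i
    have h := mul_inv_aJ (ι := Fin (c i - 1)) (x - c i) (hxc i)
      (by rw [hsum i]; exact hx1)
    rw [hsum i] at h
    exact h
  have hDD : Dblk c x * Matrix.blockDiagonal' (Ninv c x) = 1 := by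
    rw [Dblk, ← Matrix.blockDiagonal'_mul]
    rw [show (fun i => ((x - (c i : ℝ)) • 1 + Jmat (Fin (c i - 1))) * Ninv c x i)
        = fun i => (1 : Matrix (Fin (c i - 1)) (Fin (c i - 1)) ℝ) from funext hblock]
    exact Matrix.blockDiagonal'_one
  haveI : Invertible (Dblk c x) := invertibleOfRightInverse _ _ hDD
  have hinv : ⅟(Dblk c x) = Matrix.blockDiagonal' (Ninv c x) := invOf_eq_right_inv hDD
  rw [key_matrix hc x, Matrix.det_submatrix_equiv_self, Matrix.det_fromBlocks₂₂, hinv]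
  set S : ℝ := ((∑ i, (c i - 1) : ℕ) : ℝ) with hS
  -- determinant of D
  have hdetD : (Dblk c x).det = (∏ i, (x - (c i : ℝ)) ^ (c i - 2)) * (x - 1) ^ k := by
    rw [Dblk, det_blockDiagonal'']
    have : ∀ i : Fin k,
        ((x - (c i : ℝ)) • (1 : Matrix (Fin (c i - 1)) (Fin (c i - 1)) ℝ) + Jmat _).det
          = (x - (c i : ℝ)) ^ (c i - 2) * (x - 1) := by
      intro i
      rw [det_aJ (x - c i) (hxc i) (by rw [Fintype.card_fin]; exact hm1 i), hsum i,
        Fintype.card_fin]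
      have he : c i - 1 - 1 = c i - 2 := by omega
      rw [he]
    rw [Finset.prod_congr rfl fun i _ => this i, Finset.prod_mul_distrib,
      Finset.prod_const, Finset.card_univ, Fintype.card_fin]
  -- sum of all entries of D⁻¹
  have hsig : ∀ (g : (Σ j : Fin k, Fin (c j - 1)) → ℝ),
      ∑ p : Σ j : Fin k, Fin (c j - 1), g p = ∑ i, ∑ a : Fin (c i - 1), g ⟨i, a⟩ := by
    intro g
    rw [← Finset.univ_sigma_univ, Finset.sum_sigma]
  have hrow : ∀ (i : Fin k) (a : Fin (c i - 1)),
      ∑ q : Σ j : Fin k, Fin (c j - 1), Matrix.blockDiagonal' (Ninv c x) ⟨i, a⟩ q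
        = (x - c i)⁻¹ + ((c i : ℝ) - 1) * (-((x - c i) * (x - 1))⁻¹) := by
    intro i a
    rw [hsig]
    rw [Finset.sum_eq_single i]
    · have : ∀ b : Fin (c i - 1),
          Matrix.blockDiagonal' (Ninv c x) ⟨i, a⟩ ⟨i, b⟩
            = (x - c i)⁻¹ * (if a = b then 1 else 0) + (-((x - c i) * (x - 1))⁻¹) := by
        intro b
        rw [Matrix.blockDiagonal'_apply_eq, Ninv]
        simp [Matrix.one_apply, Jmat]
      rw [Finset.sum_congr rfl fun b _ => this b, Finset.sum_add_distrib]
      congr 1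
      · simp
      · rw [Finset.sum_const, Finset.card_univ, Fintype.card_fin, nsmul_eq_mul]
        rw [Nat.cast_sub (by have := hc i; omega)]
        simp
    · intro j _ hji
      refine Finset.sum_eq_zero fun b _ => ?_
      exact Matrix.blockDiagonal'_apply_ne _ _ _ (Ne.symm hji)
    · intro h; exact absurd (Finset.mem_univ i) h
  have hsumD : ∑ p : Σ j : Fin k, Fin (c j - 1), ∑ q : Σ j : Fin k, Fin (c j - 1),
      Matrix.blockDiagonal' (Ninv c x) p q = S / (x - 1) := by
    rw [hsig]
    have h1 : ∀ i : Fin k,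
        ∑ a : Fin (c i - 1), ∑ q : Σ j : Fin k, Fin (c j - 1),
          Matrix.blockDiagonal' (Ninv c x) ⟨i, a⟩ q = ((c i : ℝ) - 1) / (x - 1) := by
      intro i
      rw [Finset.sum_congr rfl fun a _ => hrow i a, Finset.sum_const, Finset.card_univ,
        Fintype.card_fin, nsmul_eq_mul, Nat.cast_sub (by have := hc i; omega)]
      push_cast
      rw [eq_div_iff hx1]
      have h2 := hxc i
      field_simp
      ring
    rw [Finset.sum_congr rfl fun i _ => h1 i, ← Finset.sum_div]
    congr 1
    rw [hS, Nat.cast_sum]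
    refine Finset.sum_congr rfl fun i _ => ?_
    rw [Nat.cast_sub (by have := hc i; omega)]
    simp
  -- the Schur complement determinant
  have hschur : ((Matrix.of fun (_ _ : Unit) => x - S)
      - (Matrix.of fun (_ : Unit) (_ : Σ j : Fin k, Fin (c j - 1)) => (1:ℝ))
          * Matrix.blockDiagonal' (Ninv c x)
          * (Matrix.of fun (_ : Σ j : Fin k, Fin (c j - 1)) (_ : Unit) => (1:ℝ))).det
        = (x - S) - S / (x - 1) := by
    rw [Matrix.det_unique]
    rw [Matrix.sub_apply]
    congr 1
    rw [Matrix.mul_apply]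
    rw [← hsumD]
    rw [Finset.sum_comm (f := fun p q => Matrix.blockDiagonal' (Ninv c x) p q)]
    refine Finset.sum_congr rfl fun q _ => ?_
    rw [Matrix.mul_apply]
    simp
  rw [hdetD, hschur]
  obtain ⟨k', rfl⟩ : ∃ k', k = k' + 1 := ⟨k - 1, by omega⟩
  simp only [Nat.add_sub_cancel]
  rw [pow_succ]
  field_simp
  ring


lemma eval_charpoly_eq {ι : Type*} [Fintype ι] [DecidableEq ι] (M : Matrix ι ι ℝ) (x : ℝ) :
    (M.charpoly).eval x = (x • (1 : Matrix ι ι ℝ) - M).det := by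
  rw [Matrix.charpoly, ← Polynomial.coe_evalRingHom, RingHom.map_det]
  congr 1
  ext i j
  by_cases h : i = j
  · subst h
    simp [Matrix.charmatrix_apply_eq, Matrix.one_apply]
  · simp [Matrix.charmatrix_apply_ne _ _ _ h, Matrix.one_apply, h]

theorem lap_spectrum_cliqueStar {k : ℕ} (hk : 1 ≤ k)
    (c : Fin k → ℕ) (hc : ∀ i, 2 ≤ c i) (N : ℕ) (hN : N = 1 + ∑ i, (c i - 1)) :
    (SimpleGraph.lapMatrix ℝ (cliqueStar c)).charpoly
      = X * (X - C (N : ℝ)) * (X - C (1 : ℝ)) ^ (k - 1)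
        * ∏ i : Fin k, (X - C (c i : ℝ)) ^ (c i - 2) := by
  apply Polynomial.eq_of_infinite_eval_eq
  have hfin : Set.Finite (insert (1:ℝ) (Set.range fun i : Fin k => (c i : ℝ))) :=
    (Set.finite_range _).insert 1
  refine Set.Infinite.mono ?_ hfin.infinite_compl
  intro x hx
  simp only [Set.mem_compl_iff, Set.mem_insert_iff, Set.mem_range, not_or, not_exists] at hx
  obtain ⟨hx1, hxc⟩ := hx
  have hx1' : x - 1 ≠ 0 := sub_ne_zero.mpr hx1
  have hxc' : ∀ i, x - (c i : ℝ) ≠ 0 := fun i => sub_ne_zero.mpr fun h => hxc i h.symm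
  show _ = _
  rw [eval_charpoly_eq, main_det hk hc x hx1' hxc']
  simp only [eval_mul, eval_pow, eval_sub, eval_X, eval_C, Polynomial.eval_prod]
  rw [hN]
  push_cast
  ring
end CliqueStarAux
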